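/- Let $(D_1,C_1)$ and $(D_2,C_2)$ be poly-tilings of $\mathbb{F}_2^n$ and $\mathbb{F}_2^m$ respectively, and suppose $D_1=B_{d_1}(0,r)$ and $D_2=B_{d_2}(0,r)$ for TS-metrics $d_1,d_2$ and a common radius $r>0$. Then $(D_1\mid D_2,\ C_1\mid C_2)$ is a poly-tiling of $\mathbb{F}_2^{n+m}$ and $D_1\mid D_2=B_{d_{\max}}(0,r)$, where $d_{\max}(x,y)=\max\{d_1(x_1,y_1),d_2(x_2,y_2)\}$ for $x=x_1\mid x_2$, $y=y_1\mid y_2$. -/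
import Mathlib


abbrev V (n : ℕ) := Fin n → ZMod 2

/-- The support of a vector. -/
def supp {n : ℕ} (x : V n) : Set (Fin n) := {i | x i ≠ 0}

/-- `d` is a metric on `𝔽₂ⁿ`. -/
def IsMetric {n : ℕ} (d : V n → V n → ℝ) : Prop :=
  (∀ x y, 0 ≤ d x y) ∧ (∀ x y, d x y = 0 ↔ x = y) ∧
  (∀ x y, d x y = d y x) ∧ (∀ x y z, d x z ≤ d x y + d y z)

/-- `d` is translation-invariant. -/
def TransInv {n : ℕ} (d : V n → V n → ℝ) : Prop :=
  ∀ x y z : V n, d (x + z) (y + z) = d x y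

/-- The weight of `d` respects supports. -/
def RespectsSupport {n : ℕ} (d : V n → V n → ℝ) : Prop :=
  ∀ x y : V n, supp x ⊆ supp y → d x 0 ≤ d y 0

/-- A TS-metric: a translation-invariant metric respecting supports. -/
def IsTSMetric {n : ℕ} (d : V n → V n → ℝ) : Prop :=
  IsMetric d ∧ TransInv d ∧ RespectsSupport d

/-- The ball of center `x` and radius `r`. -/
def ball {n : ℕ} (d : V n → V n → ℝ) (x : V n) (r : ℝ) : Set (V n) :=
  {y | d x y ≤ r}

/-- Concatenation of a set of vectors of `𝔽₂ⁿ` with a set of vectors of `𝔽₂ᵐ`. -/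
def concatSet {n m : ℕ} (A : Set (V n)) (B : Set (V m)) : Set (V (n + m)) :=
  {z | ∃ a ∈ A, ∃ b ∈ B, z = Fin.append a b}

/-- `(D, C)` is a tiling of `𝔽₂ⁿ`. -/
def IsTiling {n : ℕ} (D C : Set (V n)) : Prop :=
  (⋃ c ∈ C, (fun x => c + x) '' D) = Set.univ ∧
  C.PairwiseDisjoint (fun c => (fun x => c + x) '' D)

/-- `γ` is a geodesic path of length `t` (for the Hamming distance). -/
def IsGeodesic {n : ℕ} (γ : ℕ → V n) (t : ℕ) : Prop :=
  (∀ i < t, hammingDist (γ i) (γ (i + 1)) = 1) ∧ hammingDist (γ 0) (γ t) = t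

/-- A polyhedromino: a nonempty set any two points of which are connected by a
geodesic path contained in the set. -/
def IsPolyhedromino {n : ℕ} (D : Set (V n)) : Prop :=
  D.Nonempty ∧ ∀ x ∈ D, ∀ y ∈ D, ∃ (t : ℕ) (γ : ℕ → V n),
    IsGeodesic γ t ∧ γ 0 = x ∧ γ t = y ∧ ∀ i ≤ t, γ i ∈ D

/-- A poly-tiling: a tiling whose tile is a polyhedromino. -/
def IsPolyTiling {n : ℕ} (D C : Set (V n)) : Prop :=
  IsTiling D C ∧ IsPolyhedromino D

/-- The first `n` coordinates of a vector of `𝔽₂ⁿ⁺ᵐ`. -/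
def fstV {n m : ℕ} (x : V (n + m)) : V n := fun i => x (Fin.castAdd m i)

/-- The last `m` coordinates of a vector of `𝔽₂ⁿ⁺ᵐ`. -/
def sndV {n m : ℕ} (x : V (n + m)) : V m := fun j => x (Fin.natAdd n j)

/-- The maximum combination of two metrics. -/
def dmax {n m : ℕ} (d₁ : V n → V n → ℝ) (d₂ : V m → V m → ℝ) :
    V (n + m) → V (n + m) → ℝ :=
  fun x y => max (d₁ (fstV x) (fstV y)) (d₂ (sndV x) (sndV y))

lemma pt_fstV_append {n m : ℕ} (a : V n) (b : V m) : fstV (Fin.append a b) = a :=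
  funext fun i => Fin.append_left a b i
lemma pt_sndV_append {n m : ℕ} (a : V n) (b : V m) : sndV (Fin.append a b) = b :=
  funext fun j => Fin.append_right a b j
lemma pt_append_fst_snd {n m : ℕ} (x : V (n + m)) : Fin.append (fstV x) (sndV x) = x := by
  funext i
  induction i using Fin.addCases with
  | left j => simp [fstV, Fin.append_left]
  | right j => simp [sndV, Fin.append_right]
lemma pt_append_add {n m : ℕ} (a a' : V n) (b b' : V m) :
    Fin.append (a + a') (b + b') = Fin.append a b + Fin.append a' b' := by
  funext i
  induction i using Fin.addCases with
  | left j => simp [Fin.append_left]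
  | right j => simp [Fin.append_right]
lemma pt_fstV_add {n m : ℕ} (x y : V (n + m)) : fstV (x + y) = fstV x + fstV y := rfl
lemma pt_sndV_add {n m : ℕ} (x y : V (n + m)) : sndV (x + y) = sndV x + sndV y := rfl
lemma pt_hamming_append {n m : ℕ} (a a' : V n) (b b' : V m) :
    hammingDist (Fin.append a b) (Fin.append a' b') = hammingDist a a' + hammingDist b b' := by
  simp only [hammingDist, Finset.card_filter]
  rw [Fin.sum_univ_add]
  simp [Fin.append_left, Fin.append_right]

lemma pt_mem_concat {n m : ℕ} {A : Set (V n)} {B : Set (V m)} {z : V (n + m)} :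
    z ∈ concatSet A B ↔ fstV z ∈ A ∧ sndV z ∈ B := by
  constructor
  · rintro ⟨a, ha, b, hb, rfl⟩
    rw [pt_fstV_append, pt_sndV_append]; exact ⟨ha, hb⟩
  · rintro ⟨h1, h2⟩
    exact ⟨fstV z, h1, sndV z, h2, (pt_append_fst_snd z).symm⟩

theorem stmt_11 {n m : ℕ} (D₁ C₁ : Set (V n)) (D₂ C₂ : Set (V m))
    (d₁ : V n → V n → ℝ) (d₂ : V m → V m → ℝ) (r : ℝ)
    (ht₁ : IsPolyTiling D₁ C₁) (ht₂ : IsPolyTiling D₂ C₂)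
    (hd₁ : IsTSMetric d₁) (hd₂ : IsTSMetric d₂) (hr : 0 < r)
    (hD₁ : D₁ = ball d₁ 0 r) (hD₂ : D₂ = ball d₂ 0 r) :
    IsPolyTiling (concatSet D₁ D₂) (concatSet C₁ C₂) ∧
      concatSet D₁ D₂ = ball (dmax d₁ d₂) 0 r := by
  obtain ⟨⟨hcov₁, hdis₁⟩, hne₁, hgeo₁⟩ := ht₁
  obtain ⟨⟨hcov₂, hdis₂⟩, hne₂, hgeo₂⟩ := ht₂
  refine ⟨⟨⟨?_, ?_⟩, ?_, ?_⟩, ?_⟩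
  · -- covering
    ext z
    simp only [Set.mem_iUnion, Set.mem_image, Set.mem_univ, iff_true]
    have h1 : fstV z ∈ ⋃ c ∈ C₁, (fun x => c + x) '' D₁ := hcov₁ ▸ Set.mem_univ _
    have h2 : sndV z ∈ ⋃ c ∈ C₂, (fun x => c + x) '' D₂ := hcov₂ ▸ Set.mem_univ _
    simp only [Set.mem_iUnion, Set.mem_image] at h1 h2
    obtain ⟨c₁, hc₁, x₁, hx₁, he₁⟩ := h1
    obtain ⟨c₂, hc₂, x₂, hx₂, he₂⟩ := h2
    refine ⟨Fin.append c₁ c₂, ⟨c₁, hc₁, c₂, hc₂, rfl⟩, Fin.append x₁ x₂,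
      pt_mem_concat.mpr ⟨by rwa [pt_fstV_append], by rwa [pt_sndV_append]⟩, ?_⟩
    rw [← pt_append_add, he₁, he₂, pt_append_fst_snd]
  · -- disjointness
    rintro c hc c' hc' hne
    simp only [Function.onFun]
    rw [Set.disjoint_left]
    rintro z ⟨x, hx, rfl⟩ ⟨x', hx', hzz0⟩
    have hzz : c' + x' = c + x := hzz0
    obtain ⟨hx1, hx2⟩ := pt_mem_concat.mp hx
    obtain ⟨hx1', hx2'⟩ := pt_mem_concat.mp hx'
    obtain ⟨hc1, hc2⟩ := pt_mem_concat.mp hc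
    obtain ⟨hc1', hc2'⟩ := pt_mem_concat.mp hc'
    have h1 : fstV c' + fstV x' = fstV c + fstV x := by
      rw [← pt_fstV_add, ← pt_fstV_add, hzz]
    have h2 : sndV c' + sndV x' = sndV c + sndV x := by
      rw [← pt_sndV_add, ← pt_sndV_add, hzz]
    have hcc1 : fstV c = fstV c' := by
      by_contra hne1
      exact Set.disjoint_left.mp (hdis₁ hc1 hc1' hne1)
        ⟨fstV x, hx1, rfl⟩ ⟨fstV x', hx1', h1⟩
    have hcc2 : sndV c = sndV c' := by
      by_contra hne2
      exact Set.disjoint_left.mp (hdis₂ hc2 hc2' hne2)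
        ⟨sndV x, hx2, rfl⟩ ⟨sndV x', hx2', h2⟩
    exact hne (by rw [← pt_append_fst_snd c, hcc1, hcc2, pt_append_fst_snd])
  · -- nonempty
    obtain ⟨a, ha⟩ := hne₁
    obtain ⟨b, hb⟩ := hne₂
    exact ⟨Fin.append a b, a, ha, b, hb, rfl⟩
  · -- polyhedromino geodesics
    rintro x hx y hy
    obtain ⟨hx1, hx2⟩ := pt_mem_concat.mp hx
    obtain ⟨hy1, hy2⟩ := pt_mem_concat.mp hy
    obtain ⟨t₁, γ₁, ⟨hg₁, he₁⟩, h0₁, ht₁', hm₁⟩ := hgeo₁ _ hx1 _ hy1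
    obtain ⟨t₂, γ₂, ⟨hg₂, he₂⟩, h0₂, ht₂', hm₂⟩ := hgeo₂ _ hx2 _ hy2
    refine ⟨t₁ + t₂, fun i => Fin.append (γ₁ (min i t₁)) (γ₂ (i - t₁)), ⟨?_, ?_⟩, ?_, ?_, ?_⟩
    · intro i hi
      rcases lt_or_ge i t₁ with h | h
      · have e1 : min i t₁ = i := by omega
        have e2 : min (i + 1) t₁ = i + 1 := by omega
        have e3 : i - t₁ = 0 := by omega
        have e4 : i + 1 - t₁ = 0 := by omega
        simp only [e1, e2, e3, e4]
        rw [pt_hamming_append, hg₁ i h, hammingDist_self]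
      · have e1 : min i t₁ = t₁ := by omega
        have e2 : min (i + 1) t₁ = t₁ := by omega
        have e3 : i + 1 - t₁ = (i - t₁) + 1 := by omega
        simp only [e1, e2, e3]
        rw [pt_hamming_append, hammingDist_self, hg₂ (i - t₁) (by omega)]
    · have e1 : min (t₁ + t₂) t₁ = t₁ := by omega
      have e2 : t₁ + t₂ - t₁ = t₂ := by omega
      simp only [Nat.zero_min, Nat.zero_sub, e1, e2]
      rw [pt_hamming_append, he₁, he₂]
    · simp only [Nat.zero_min, Nat.zero_sub, h0₁, h0₂]
      exact pt_append_fst_snd x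
    · have e1 : min (t₁ + t₂) t₁ = t₁ := by omega
      have e2 : t₁ + t₂ - t₁ = t₂ := by omega
      simp only [e1, e2, ht₁', ht₂']
      exact pt_append_fst_snd y
    · intro i hi
      exact pt_mem_concat.mpr (by
        rw [pt_fstV_append, pt_sndV_append]
        exact ⟨hm₁ _ (by omega), hm₂ _ (by omega)⟩)
  · -- ball equality
    ext z
    rw [pt_mem_concat, hD₁, hD₂]
    simp only [ball, dmax, Set.mem_setOf_eq, max_le_iff]
    rfl
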